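/- arXiv:1712.09006 — 3 statements merged into one kernel-verified Lean document; each statement's English description precedes it below -/
import Mathlib

section
/- Let (L, R) be a 0-deterministic QIVPM on ℂ^d and let Q : Fin d → Matrix (Fin d) (Fin d) ℂ be a family of projectors with Q i * Q j = 0 for all i ≠ j and ∑ i, Q i = 1 (e.g. the rank-one projections onto an orthonormal basis). Then there is exactly one index i with (L (Q i), R (Q i)) = (1, 1), and (L (Q j), R (Q j)) = (0, 0) for every j ≠ i. -/
open Matrix
open scoped ComplexOrder

/-- A projector on `ℂ^d`: an idempotent, self-adjoint matrix. -/
def IsProjector {d : ℕ} (P : Matrix (Fin d) (Fin d) ℂ) : Prop :=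
  P * P = P ∧ Pᴴ = P

/-- A quantum interval-valued probability measure (QIVPM) on `ℂ^d`,
given by the pair of interval-endpoint functions `L ≤ R`. -/
def IsQIVPM {d : ℕ} (L R : Matrix (Fin d) (Fin d) ℂ → ℝ) : Prop :=
  (∀ P, IsProjector P → 0 ≤ L P ∧ L P ≤ R P ∧ R P ≤ 1) ∧
  (L 0 = 0 ∧ R 0 = 0) ∧
  (L 1 = 1 ∧ R 1 = 1) ∧
  (∀ P, IsProjector P → L (1 - P) = 1 - R P ∧ R (1 - P) = 1 - L P) ∧
  (∀ P₀ P₁, IsProjector P₀ → IsProjector P₁ → P₀ * P₁ = P₁ * P₀ →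
    L P₀ + L P₁ ≤ L (P₀ + P₁ - P₀ * P₁) + L (P₀ * P₁) ∧
    R (P₀ + P₁ - P₀ * P₁) + R (P₀ * P₁) ≤ R P₀ + R P₁)

/-- A QIVPM is `δ`-deterministic if every projector's interval lies in `[0,δ]` or `[1-δ,1]`. -/
def IsDeltaDet {d : ℕ} (δ : ℝ) (L R : Matrix (Fin d) (Fin d) ℂ → ℝ) : Prop :=
  ∀ P, IsProjector P → R P ≤ δ ∨ 1 - δ ≤ L P

/-- A QIVPM is `0`-deterministic if every projector is assigned `[0,0]` or `[1,1]`. -/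
def IsZeroDet {d : ℕ} (L R : Matrix (Fin d) (Fin d) ℂ → ℝ) : Prop :=
  ∀ P, IsProjector P → (L P = 0 ∧ R P = 0) ∨ (L P = 1 ∧ R P = 1)

/-- A state (density matrix) on `ℂ^d`. -/
def IsState {d : ℕ} (ρ : Matrix (Fin d) (Fin d) ℂ) : Prop :=
  ρ.PosSemidef ∧ ρ.trace = 1

/-- Under a 0-deterministic QIVPM, a complete family of mutually orthogonal
projectors summing to `1` has exactly one member assigned `[1,1]`, the rest `[0,0]`. -/
theorem zeroDet_unique_certain_event (d : ℕ)
    (L R : Matrix (Fin d) (Fin d) ℂ → ℝ) (hQ : IsQIVPM L R) (hdet : IsZeroDet L R)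
    (Q : Fin d → Matrix (Fin d) (Fin d) ℂ)
    (hproj : ∀ i, IsProjector (Q i))
    (horth : ∀ i j, i ≠ j → Q i * Q j = 0)
    (hsum : ∑ i, Q i = 1) :
    ∃ i, (L (Q i) = 1 ∧ R (Q i) = 1) ∧
      ∀ j, j ≠ i → L (Q j) = 0 ∧ R (Q j) = 0 := by
  obtain ⟨hbd, ⟨hL0, hR0⟩, ⟨hL1, hR1⟩, hcompl, hconv⟩ := hQ
  -- partial sums are projectors
  have hP : ∀ s : Finset (Fin d), IsProjector (∑ i ∈ s, Q i) := by
    intro s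
    constructor
    · rw [Finset.sum_mul]
      refine Finset.sum_congr rfl fun i hi => ?_
      rw [Finset.mul_sum, Finset.sum_eq_single i
        (fun b _ hb => horth i b (Ne.symm hb)) (fun h => absurd hi h)]
      exact (hproj i).1
    · rw [Matrix.conjTranspose_sum]
      exact Finset.sum_congr rfl fun i _ => (hproj i).2
  have key : ∀ s : Finset (Fin d),
      (∑ i ∈ s, L (Q i)) ≤ L (∑ i ∈ s, Q i) ∧ R (∑ i ∈ s, Q i) ≤ ∑ i ∈ s, R (Q i) := by
    intro s
    induction s using Finset.induction_on with
    | empty => simp [hL0, hR0]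
    | @insert a s ha ih =>
      have h0 : Q a * (∑ i ∈ s, Q i) = 0 := by
        rw [Finset.mul_sum]
        exact Finset.sum_eq_zero fun i hi => horth a i (fun h => ha (h ▸ hi))
      have h0' : (∑ i ∈ s, Q i) * Q a = 0 := by
        rw [Finset.sum_mul]
        exact Finset.sum_eq_zero fun i hi => horth i a (fun h => ha (h ▸ hi))
      have hc := hconv (Q a) (∑ i ∈ s, Q i) (hproj a) (hP s) (by rw [h0, h0'])
      rw [h0, sub_zero, hL0, hR0] at hc
      rw [Finset.sum_insert ha, Finset.sum_insert ha, Finset.sum_insert ha]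
      constructor
      · linarith [ih.1, hc.1]
      · linarith [ih.2, hc.2]
  have hK := key Finset.univ
  rw [hsum] at hK
  have hLsum : (∑ i, L (Q i)) ≤ 1 := hL1 ▸ hK.1
  have hRsum : (1 : ℝ) ≤ ∑ i, R (Q i) := hR1 ▸ hK.2
  have hLR : ∀ i, L (Q i) = R (Q i) := by
    intro i
    rcases hdet (Q i) (hproj i) with ⟨h1, h2⟩ | ⟨h1, h2⟩ <;> rw [h1, h2]
  have hsumeq : (∑ i, L (Q i)) = 1 := by
    have : (∑ i, L (Q i)) = ∑ i, R (Q i) := Finset.sum_congr rfl fun i _ => hLR i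
    linarith
  have hnonneg : ∀ i, 0 ≤ L (Q i) := fun i => (hbd (Q i) (hproj i)).1
  have hex : ∃ i, L (Q i) = 1 := by
    by_contra h
    push_neg at h
    have : ∀ i ∈ Finset.univ, L (Q i) = 0 := by
      intro i _
      rcases hdet (Q i) (hproj i) with ⟨h1, _⟩ | ⟨h1, _⟩
      · exact h1
      · exact absurd h1 (h i)
    rw [Finset.sum_congr rfl this] at hsumeq
    simp at hsumeq
  obtain ⟨i, hi⟩ := hex
  have hiR : R (Q i) = 1 := (hLR i) ▸ hi
  refine ⟨i, ⟨hi, hiR⟩, fun j hj => ?_⟩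
  have herase : (∑ k ∈ Finset.univ.erase i, L (Q k)) = 0 := by
    have := Finset.sum_erase_add Finset.univ (fun k => L (Q k)) (Finset.mem_univ i)
    simp only [hi, hsumeq] at this
    linarith
  have hLj : L (Q j) = 0 := by
    have := (Finset.sum_eq_zero_iff_of_nonneg
      (fun k _ => hnonneg k)).mp herase j (Finset.mem_erase.mpr ⟨hj, Finset.mem_univ j⟩)
    exact this
  exact ⟨hLj, (hLR j) ▸ hLj⟩
end

section
/- (Restriction of a QIVPM to commuting events is a classical IVPM) Let (L, R) be a QIVPM on ℂ^d and let Q : Fin d → Matrix (Fin d) (Fin d) ℂ be projectors with Q i * Q j = 0 for all i ≠ j and ∑ i, Q i = 1. For S : Finset (Fin d) define ν_L S = L (∑ i in S, Q i) and ν_R S = R (∑ i in S, Q i). Then (ν_L, ν_R) is a classical IVPM on subsets of Fin d: ν_L ∅ = ν_R ∅ = 0; ν_L Finset.univ = ν_R Finset.univ = 1; ν_L Sᶜ = 1 − ν_R S and ν_R Sᶜ = 1 − ν_L S for every S; 0 ≤ ν_L S ≤ ν_R S ≤ 1 for every S; and for all S, T: ν_L S + ν_L T ≤ ν_L (S ∪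 T) + ν_L (S ∩ T) and ν_R (S ∪ T) + ν_R (S ∩ T) ≤ ν_R S + ν_R T. -/
open Matrix
open scoped ComplexOrder

lemma sum_mul_sum_inter {d : ℕ} (Q : Fin d → Matrix (Fin d) (Fin d) ℂ)
    (hproj : ∀ i, IsProjector (Q i))
    (horth : ∀ i j, i ≠ j → Q i * Q j = 0) (S T : Finset (Fin d)) :
    (∑ i ∈ S, Q i) * (∑ j ∈ T, Q j) = ∑ i ∈ S ∩ T, Q i := by
  rw [Finset.sum_mul]
  have h1 : ∀ i, Q i * ∑ j ∈ T, Q j = if i ∈ T then Q i else 0 := by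
    intro i
    rw [Finset.mul_sum]
    by_cases hi : i ∈ T
    · rw [if_pos hi, Finset.sum_eq_single i
        (fun j _ hne => horth i j (Ne.symm hne)) (fun h => absurd hi h)]
      exact (hproj i).1
    · rw [if_neg hi]
      exact Finset.sum_eq_zero fun j hj => horth i j (fun h => hi (h ▸ hj))
  simp_rw [h1]
  exact Finset.sum_ite_mem S T Q

lemma sum_proj {d : ℕ} (Q : Fin d → Matrix (Fin d) (Fin d) ℂ)
    (hproj : ∀ i, IsProjector (Q i))
    (horth : ∀ i j, i ≠ j → Q i * Q j = 0) (S : Finset (Fin d)) :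
    IsProjector (∑ i ∈ S, Q i) := by
  constructor
  · rw [sum_mul_sum_inter Q hproj horth, Finset.inter_self]
  · rw [conjTranspose_sum]
    exact Finset.sum_congr rfl fun i _ => (hproj i).2

/-- Restriction of a QIVPM to a complete commuting family of projectors yields a
classical IVPM on the subsets of `Fin d`. -/
theorem QIVPM_restriction_is_classical_IVPM (d : ℕ)
    (L R : Matrix (Fin d) (Fin d) ℂ → ℝ) (hQ : IsQIVPM L R)
    (Q : Fin d → Matrix (Fin d) (Fin d) ℂ)
    (hproj : ∀ i, IsProjector (Q i))
    (horth : ∀ i j, i ≠ j → Q i * Q j = 0)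
    (hsum : ∑ i, Q i = 1) :
    (L (∑ i ∈ (∅ : Finset (Fin d)), Q i) = 0 ∧ R (∑ i ∈ (∅ : Finset (Fin d)), Q i) = 0) ∧
    (L (∑ i ∈ (Finset.univ : Finset (Fin d)), Q i) = 1 ∧
      R (∑ i ∈ (Finset.univ : Finset (Fin d)), Q i) = 1) ∧
    (∀ S : Finset (Fin d),
      L (∑ i ∈ Sᶜ, Q i) = 1 - R (∑ i ∈ S, Q i) ∧
      R (∑ i ∈ Sᶜ, Q i) = 1 - L (∑ i ∈ S, Q i)) ∧
    (∀ S : Finset (Fin d),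
      0 ≤ L (∑ i ∈ S, Q i) ∧ L (∑ i ∈ S, Q i) ≤ R (∑ i ∈ S, Q i) ∧
      R (∑ i ∈ S, Q i) ≤ 1) ∧
    (∀ S T : Finset (Fin d),
      L (∑ i ∈ S, Q i) + L (∑ i ∈ T, Q i) ≤
        L (∑ i ∈ S ∪ T, Q i) + L (∑ i ∈ S ∩ T, Q i) ∧
      R (∑ i ∈ S ∪ T, Q i) + R (∑ i ∈ S ∩ T, Q i) ≤
        R (∑ i ∈ S, Q i) + R (∑ i ∈ T, Q i)) := by
  obtain ⟨hbound, ⟨hL0, hR0⟩, ⟨hL1, hR1⟩, hcompl, hconv⟩ := hQ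
  have hP := sum_proj Q hproj horth
  have hmul := sum_mul_sum_inter Q hproj horth
  refine ⟨?_, ?_, ?_, ?_, ?_⟩
  · simp [hL0, hR0]
  · rw [hsum]; exact ⟨hL1, hR1⟩
  · intro S
    have hc : ∑ i ∈ Sᶜ, Q i = 1 - ∑ i ∈ S, Q i := by
      rw [eq_sub_iff_add_eq, Finset.sum_compl_add_sum, hsum]
    rw [hc]
    exact hcompl _ (hP S)
  · intro S
    exact hbound _ (hP S)
  · intro S T
    have hcomm : (∑ i ∈ S, Q i) * (∑ i ∈ T, Q i)
        = (∑ i ∈ T, Q i) * (∑ i ∈ S, Q i) := by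
      rw [hmul, hmul, Finset.inter_comm]
    have hu : ∑ i ∈ S ∪ T, Q i
        = (∑ i ∈ S, Q i) + (∑ i ∈ T, Q i) - ∑ i ∈ S ∩ T, Q i := by
      rw [eq_sub_iff_add_eq, Finset.sum_union_inter]
    have h := hconv _ _ (hP S) (hP T) hcomm
    rw [hmul S T] at h
    rw [hu]
    exact h
end

section
/- (Determinate expectation values under 0-deterministic QIVPMs) Let (L, R) be a 0-deterministic QIVPM on ℂ^d, let Q : Fin d → Matrix (Fin d) (Fin d) ℂ be projectors with Q i * Q j = 0 for all i ≠ j and ∑ i, Q i = 1, and let λ : Fin d → ℝ (the eigenvalues of an observable with spectral decomposition ∑ i, λ i • Q i). Let ρ be a state on ℂ^d consistent with (L, R) at every Q i, and let j be an index with (L (Q j), R (Q j)) = (1, 1). Then the expectation value of the observable in the state ρ equals the eigenvalue λ j: ∑ i, λ i * Re (Matrix.trace (ρ * Q i)) = λ j. -/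
open Matrix
open scoped ComplexOrder

/-- Determinate expectation values under 0-deterministic QIVPMs: if a state is
consistent with a 0-deterministic QIVPM on a complete commuting family of projectors
`Q i` (the spectral projections of an observable `∑ i, λ i • Q i`), then the
expectation value equals the eigenvalue whose projector is certain. -/
theorem zeroDet_expectation_is_eigenvalue (d : ℕ)
    (L R : Matrix (Fin d) (Fin d) ℂ → ℝ) (hQ : IsQIVPM L R) (hdet : IsZeroDet L R)
    (Q : Fin d → Matrix (Fin d) (Fin d) ℂ)
    (hproj : ∀ i, IsProjector (Q i))
    (horth : ∀ i j, i ≠ j → Q i * Q j = 0)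
    (hsum : ∑ i, Q i = 1)
    (lam : Fin d → ℝ)
    (ρ : Matrix (Fin d) (Fin d) ℂ) (hρ : IsState ρ)
    (hcons : ∀ i, L (Q i) ≤ (Matrix.trace (ρ * Q i)).re ∧
      (Matrix.trace (ρ * Q i)).re ≤ R (Q i))
    (j : Fin d) (hj : L (Q j) = 1 ∧ R (Q j) = 1) :
    ∑ i, lam i * (Matrix.trace (ρ * Q i)).re = lam j := by
  set t : Fin d → ℝ := fun i => (Matrix.trace (ρ * Q i)).re with ht
  have hsumt : ∑ i, t i = 1 := by
    have : ∑ i, Matrix.trace (ρ * Q i) = 1 := by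
      rw [← Matrix.trace_sum]
      have : ∑ i, ρ * Q i = ρ * ∑ i, Q i := by rw [Finset.mul_sum]
      rw [this, hsum, mul_one, hρ.2]
    calc ∑ i, t i = (∑ i, Matrix.trace (ρ * Q i)).re := by
          simp [ht, Complex.re_sum]
      _ = 1 := by rw [this]; simp
  have htj : t j = 1 := by
    have h1 := (hcons j).1
    have h2 := (hcons j).2
    rw [hj.1] at h1; rw [hj.2] at h2
    exact le_antisymm h2 h1
  have hnonneg : ∀ i, 0 ≤ t i :=
    fun i => le_trans (hQ.1 (Q i) (hproj i)).1 (hcons i).1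
  have hzero : ∀ i ∈ Finset.univ, i ≠ j → t i = 0 := by
    intro i _ hij
    have hrest : ∑ k ∈ Finset.univ.erase j, t k = 0 := by
      have := Finset.add_sum_erase Finset.univ t (Finset.mem_univ j)
      rw [hsumt, htj] at this
      linarith
    exact (Finset.sum_eq_zero_iff_of_nonneg (fun k _ => hnonneg k)).mp hrest i
      (Finset.mem_erase.mpr ⟨hij, Finset.mem_univ i⟩)
  show ∑ i, lam i * t i = lam j
  rw [Finset.sum_eq_single j (fun i _ hij => by rw [hzero i (Finset.mem_univ i) hij, mul_zero])
    (fun h => absurd (Finset.mem_univ j) h), htj, mul_one]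
end
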